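/- Every nonzero homogeneous cubic polynomial in two variables over ℂ is GL₂(ℂ)-equivalent (by linear substitution of the variables) to exactly one of the three normal forms x³, x²y, and x³ + y³. In particular the nonzero states of three bosonic qubits (Sym³ℂ² under SL₂(ℂ)) form exactly three SLOCC classes: separable (cube of a linear form, the twisted cubic v₃(ℙ¹)), W-type (x²y, the tangential variety) and GHZ-type (x³ + y³, cubics with three distinct roots). -/

import Mathlib

open MvPolynomial

noncomputable section

/-- Linear substitution of variables: the matrix g sends the polynomial f(x,y) to
f(g₁₁x + g₂₁y, g₁₂x + g₂₂y), i.e. the variable Xᵢ is replaced by ∑ⱼ gⱼᵢ Xⱼ. -/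
def subst (g : Matrix (Fin 2) (Fin 2) ℂ) :
    MvPolynomial (Fin 2) ℂ →ₐ[ℂ] MvPolynomial (Fin 2) ℂ :=
  aeval (fun i => ∑ j, C (g j i) * X j)

/-- Two binary forms are GL₂(ℂ)-equivalent if one is obtained from the other by an
invertible linear substitution of the variables. -/
def CubicEquiv (f h : MvPolynomial (Fin 2) ℂ) : Prop :=
  ∃ g : GL (Fin 2) ℂ, subst (g : Matrix (Fin 2) (Fin 2) ℂ) f = h


lemma subst_comp (g h : Matrix (Fin 2) (Fin 2) ℂ) (f : MvPolynomial (Fin 2) ℂ) :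
    subst h (subst g f) = subst (h * g) f := by
  have : (subst h).comp (subst g) = subst (h * g) := by
    apply MvPolynomial.algHom_ext
    intro i
    simp [subst, Fin.sum_univ_two, Matrix.mul_apply, mul_add]
    ring
  exact DFunLike.congr_fun this f

lemma subst_one (f : MvPolynomial (Fin 2) ℂ) : subst (1 : Matrix (Fin 2) (Fin 2) ℂ) f = f := by
  have : subst (1 : Matrix (Fin 2) (Fin 2) ℂ) = AlgHom.id ℂ _ := by
    apply MvPolynomial.algHom_ext
    intro i
    fin_cases i <;> simp [subst, Fin.sum_univ_two, Matrix.one_apply]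
  rw [this]; rfl

lemma CubicEquiv.refl (f : MvPolynomial (Fin 2) ℂ) : CubicEquiv f f := ⟨1, by simpa using subst_one f⟩

lemma CubicEquiv.symm {f h : MvPolynomial (Fin 2) ℂ} : CubicEquiv f h → CubicEquiv h f := by
  rintro ⟨g, hg⟩
  exact ⟨g⁻¹, by rw [← hg, subst_comp, ← Units.val_mul, inv_mul_cancel, Units.val_one, subst_one]⟩

lemma CubicEquiv.trans {f h k : MvPolynomial (Fin 2) ℂ} :
    CubicEquiv f h → CubicEquiv h k → CubicEquiv f k := by
  rintro ⟨g, hg⟩ ⟨g', hg'⟩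
  exact ⟨g' * g, by rw [← hg', ← hg, subst_comp, Units.val_mul]⟩



def quad (a b c d : ℂ) : MvPolynomial (Fin 2) ℂ :=
  C a * X 0 ^ 3 + C b * (X 0 ^ 2 * X 1) + C c * (X 0 * X 1 ^ 2) + C d * X 1 ^ 3

def E (i j : ℕ) : Fin 2 →₀ ℕ := Finsupp.single 0 i + Finsupp.single 1 j

lemma E_apply0 (i j : ℕ) : E i j 0 = i := by simp [E, Finsupp.single_apply]
lemma E_apply1 (i j : ℕ) : E i j 1 = j := by simp [E, Finsupp.single_apply]

lemma E_inj {i j i' j' : ℕ} (h : E i j = E i' j') : i = i' ∧ j = j' := by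
  constructor
  · have := DFunLike.congr_fun h 0; rwa [E_apply0, E_apply0] at this
  · have := DFunLike.congr_fun h 1; rwa [E_apply1, E_apply1] at this

lemma quad_eq_monomials (a b c d : ℂ) :
    quad a b c d = monomial (E 3 0) a + monomial (E 2 1) b + monomial (E 1 2) c + monomial (E 0 3) d := by
  rw [quad]
  have h0 : (X 0 : MvPolynomial (Fin 2) ℂ) ^ 3 = monomial (E 3 0) 1 := by
    rw [X_pow_eq_monomial]; congr 1; simp [E]
  have h1 : (X 0 : MvPolynomial (Fin 2) ℂ) ^ 2 * X 1 = monomial (E 2 1) 1 := by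
    rw [X_pow_eq_monomial, X, monomial_mul]; simp [E]
  have h2 : (X 0 : MvPolynomial (Fin 2) ℂ) * X 1 ^ 2 = monomial (E 1 2) 1 := by
    rw [X_pow_eq_monomial, X, monomial_mul]; simp [E]
  have h3 : (X 1 : MvPolynomial (Fin 2) ℂ) ^ 3 = monomial (E 0 3) 1 := by
    rw [X_pow_eq_monomial]; congr 1; simp [E]
  rw [h0, h1, h2, h3]
  simp [C_mul_monomial]

lemma coeff_E_monomial (i j i' j' : ℕ) (x : ℂ) :
    coeff (E i j) (monomial (E i' j') x) = if i' = i ∧ j' = j then x else 0 := by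
  rw [coeff_monomial]
  by_cases h : i' = i ∧ j' = j
  · obtain ⟨rfl, rfl⟩ := h; simp
  · rw [if_neg, if_neg h]; intro he; exact h (E_inj he)

lemma coeff_quad (i j : ℕ) (a b c d : ℂ) :
    coeff (E i j) (quad a b c d) =
      (if 3 = i ∧ 0 = j then a else 0) + (if 2 = i ∧ 1 = j then b else 0)
      + (if 1 = i ∧ 2 = j then c else 0) + (if 0 = i ∧ 3 = j then d else 0) := by
  rw [quad_eq_monomials]
  simp only [coeff_add, coeff_E_monomial]

lemma quad_inj {a b c d a' b' c' d' : ℂ} (h : quad a b c d = quad a' b' c' d') :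
    a = a' ∧ b = b' ∧ c = c' ∧ d = d' := by
  refine ⟨?_, ?_, ?_, ?_⟩
  · have := congrArg (coeff (E 3 0)) h; simpa [coeff_quad] using this
  · have := congrArg (coeff (E 2 1)) h; simpa [coeff_quad] using this
  · have := congrArg (coeff (E 1 2)) h; simpa [coeff_quad] using this
  · have := congrArg (coeff (E 0 3)) h; simpa [coeff_quad] using this

lemma decomp (f : MvPolynomial (Fin 2) ℂ) (hhom : f.IsHomogeneous 3) :
    f = quad (coeff (E 3 0) f) (coeff (E 2 1) f) (coeff (E 1 2) f) (coeff (E 0 3) f) := by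
  apply MvPolynomial.ext
  intro m
  have hm : m = E (m 0) (m 1) := by
    ext i
    fin_cases i <;> simp [E, Finsupp.single_apply]
  by_cases hdeg : m 0 + m 1 = 3
  · obtain h4 : (m 0 = 3 ∧ m 1 = 0) ∨ (m 0 = 2 ∧ m 1 = 1) ∨ (m 0 = 1 ∧ m 1 = 2)
        ∨ (m 0 = 0 ∧ m 1 = 3) := by omega
    rw [hm]
    rcases h4 with ⟨h0, h1⟩ | ⟨h0, h1⟩ | ⟨h0, h1⟩ | ⟨h0, h1⟩ <;>
      rw [h0, h1, coeff_quad] <;> norm_num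
  · have hz : coeff m f = 0 := by
      apply hhom.coeff_eq_zero
      have hd : m.degree = m 0 + m 1 := by
        rw [Finsupp.degree_apply,
          Finset.sum_subset (Finset.subset_univ _)
            (fun i _ hi => Finsupp.notMem_support_iff.mp hi), Fin.sum_univ_two]
      omega
    rw [hz, hm, coeff_quad]
    have h1 : ¬ (3 = m 0 ∧ 0 = m 1) := by omega
    have h2 : ¬ (2 = m 0 ∧ 1 = m 1) := by omega
    have h3 : ¬ (1 = m 0 ∧ 2 = m 1) := by omega
    have h4 : ¬ (0 = m 0 ∧ 3 = m 1) := by omega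
    rw [if_neg h1, if_neg h2, if_neg h3, if_neg h4]
    norm_num

def A1 (a b c d p q r s : ℂ) : ℂ := a*p^3 + b*p^2*q + c*p*q^2 + d*q^3
def A2 (a b c d p q r s : ℂ) : ℂ :=
  3*a*p^2*r + b*(p^2*s + 2*p*q*r) + c*(q^2*r + 2*p*q*s) + 3*d*q^2*s
def A3 (a b c d p q r s : ℂ) : ℂ :=
  3*a*p*r^2 + b*(2*p*r*s + q*r^2) + c*(p*s^2 + 2*q*r*s) + 3*d*q*s^2
def A4 (a b c d p q r s : ℂ) : ℂ := a*r^3 + b*r^2*s + c*r*s^2 + d*s^3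

lemma subst_quad (a b c d p q r s : ℂ) :
    subst !![p, q; r, s] (quad a b c d) =
    quad (A1 a b c d p q r s) (A2 a b c d p q r s) (A3 a b c d p q r s) (A4 a b c d p q r s) := by
  simp only [quad, A1, A2, A3, A4, map_add, map_mul, map_pow, subst, aeval_C, aeval_X,
    Fin.sum_univ_two, algebraMap_eq, Matrix.cons_val', Matrix.cons_val_zero, Matrix.cons_val_one,
    Matrix.head_cons, Matrix.head_fin_const, Matrix.cons_val_fin_one, Matrix.empty_val',
    C_add, C_mul, C_pow, map_ofNat]
  have m00 : (!![p, q; r, s] : Matrix (Fin 2) (Fin 2) ℂ) 0 0 = p := rfl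
  have m01 : (!![p, q; r, s] : Matrix (Fin 2) (Fin 2) ℂ) 0 1 = q := rfl
  have m10 : (!![p, q; r, s] : Matrix (Fin 2) (Fin 2) ℂ) 1 0 = r := rfl
  have m11 : (!![p, q; r, s] : Matrix (Fin 2) (Fin 2) ℂ) 1 1 = s := rfl
  rw [m00, m01, m10, m11]
  ring

def hP (a b c d : ℂ) : ℂ := 3*a*c - b^2
def hQ (a b c d : ℂ) : ℂ := 9*a*d - b*c
def hR (a b c d : ℂ) : ℂ := 3*b*d - c^2

lemma hP_covar (a b c d p q r s : ℂ) :
    hP (A1 a b c d p q r s) (A2 a b c d p q r s) (A3 a b c d p q r s) (A4 a b c d p q r s) =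
    (p*s - q*r)^2 * (hP a b c d * p^2 + hQ a b c d * p*q + hR a b c d * q^2) := by
  simp only [hP, hQ, hR, A1, A2, A3, A4]; ring

lemma hQ_covar (a b c d p q r s : ℂ) :
    hQ (A1 a b c d p q r s) (A2 a b c d p q r s) (A3 a b c d p q r s) (A4 a b c d p q r s) =
    (p*s - q*r)^2 * (2*hP a b c d*p*r + hQ a b c d*(p*s + q*r) + 2*hR a b c d*q*s) := by
  simp only [hP, hQ, hR, A1, A2, A3, A4]; ring

lemma hR_covar (a b c d p q r s : ℂ) :
    hR (A1 a b c d p q r s) (A2 a b c d p q r s) (A3 a b c d p q r s) (A4 a b c d p q r s) =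
    (p*s - q*r)^2 * (hP a b c d * r^2 + hQ a b c d * r*s + hR a b c d * s^2) := by
  simp only [hP, hQ, hR, A1, A2, A3, A4]; ring

lemma disc2_small (P Q R p q r s : ℂ) :
    (2*P*p*r + Q*(p*s+q*r) + 2*R*q*s)^2 - 4*(P*p^2+Q*p*q+R*q^2)*(P*r^2+Q*r*s+R*s^2)
    = (p*s-q*r)^2*(Q^2-4*P*R) := by ring


lemma nf1 : (X 0 : MvPolynomial (Fin 2) ℂ) ^ 3 = quad 1 0 0 0 := by simp [quad]
lemma nf2 : (X 0 : MvPolynomial (Fin 2) ℂ) ^ 2 * X 1 = quad 0 1 0 0 := by simp [quad]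
lemma nf3 : (X 0 : MvPolynomial (Fin 2) ℂ) ^ 3 + X 1 ^ 3 = quad 1 0 0 1 := by simp [quad]

lemma GL_entries (g : GL (Fin 2) ℂ) : ∃ p q r s : ℂ, p * s - q * r ≠ 0 ∧
    (g : Matrix (Fin 2) (Fin 2) ℂ) = !![p, q; r, s] := by
  refine ⟨g.val 0 0, g.val 0 1, g.val 1 0, g.val 1 1, ?_, Matrix.eta_fin_two _⟩
  have hu : IsUnit (g.val).det := (Matrix.isUnit_iff_isUnit_det _).mp (Units.isUnit g)
  rw [Matrix.det_fin_two] at hu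
  exact hu.ne_zero

lemma equiv_quad {a b c d a' b' c' d' : ℂ}
    (h : CubicEquiv (quad a b c d) (quad a' b' c' d')) :
    ∃ p q r s : ℂ, p * s - q * r ≠ 0 ∧ a' = A1 a b c d p q r s ∧ b' = A2 a b c d p q r s
      ∧ c' = A3 a b c d p q r s ∧ d' = A4 a b c d p q r s := by
  obtain ⟨g, hg⟩ := h
  obtain ⟨p, q, r, s, hd, hM⟩ := GL_entries g
  rw [hM, subst_quad] at hg
  obtain ⟨h1, h2, h3, h4⟩ := quad_inj hg
  exact ⟨p, q, r, s, hd, h1.symm, h2.symm, h3.symm, h4.symm⟩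

lemma hess_zero_mono {a b c d a' b' c' d' : ℂ}
    (h : CubicEquiv (quad a b c d) (quad a' b' c' d'))
    (hz : hP a b c d = 0 ∧ hQ a b c d = 0 ∧ hR a b c d = 0) :
    hP a' b' c' d' = 0 ∧ hQ a' b' c' d' = 0 ∧ hR a' b' c' d' = 0 := by
  obtain ⟨p, q, r, s, hd, e1, e2, e3, e4⟩ := equiv_quad h
  obtain ⟨z1, z2, z3⟩ := hz
  subst e1; subst e2; subst e3; subst e4
  rw [hP_covar, hQ_covar, hR_covar, z1, z2, z3]
  refine ⟨by ring, by ring, by ring⟩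

lemma disc2_mono {a b c d a' b' c' d' : ℂ}
    (h : CubicEquiv (quad a b c d) (quad a' b' c' d'))
    (hz : hQ a b c d ^ 2 - 4 * hP a b c d * hR a b c d = 0) :
    hQ a' b' c' d' ^ 2 - 4 * hP a' b' c' d' * hR a' b' c' d' = 0 := by
  obtain ⟨p, q, r, s, hd, e1, e2, e3, e4⟩ := equiv_quad h
  subst e1; subst e2; subst e3; subst e4
  rw [hP_covar, hQ_covar, hR_covar]
  have hs := disc2_small (hP a b c d) (hQ a b c d) (hR a b c d) p q r s
  linear_combination (p*s-q*r)^4 * hs + (p*s-q*r)^6 * hz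

lemma nfneq12 : ¬ CubicEquiv ((X 0 : MvPolynomial (Fin 2) ℂ) ^ 3) (X 0 ^ 2 * X 1) := by
  rw [nf1, nf2]; intro h
  have := (hess_zero_mono h (by norm_num [hP, hQ, hR])).1
  norm_num [hP] at this

lemma nfneq13 : ¬ CubicEquiv ((X 0 : MvPolynomial (Fin 2) ℂ) ^ 3) (X 0 ^ 3 + X 1 ^ 3) := by
  rw [nf3, nf1]; intro h
  have := disc2_mono h (by norm_num [hP, hQ, hR])
  norm_num [hP, hQ, hR] at this

lemma nfneq23 : ¬ CubicEquiv ((X 0 : MvPolynomial (Fin 2) ℂ) ^ 2 * X 1) (X 0 ^ 3 + X 1 ^ 3) := by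
  rw [nf3, nf2]; intro h
  have := disc2_mono h (by norm_num [hP, hQ, hR])
  norm_num [hP, hQ, hR] at this

def mkGL (M : Matrix (Fin 2) (Fin 2) ℂ) (h : M.det ≠ 0) : GL (Fin 2) ℂ :=
  Matrix.GeneralLinearGroup.mkOfDetNeZero M h

lemma mkGL_coe (M : Matrix (Fin 2) (Fin 2) ℂ) (h : M.det ≠ 0) :
    (mkGL M h : Matrix (Fin 2) (Fin 2) ℂ) = M := rfl

lemma equiv_of_subst (M : Matrix (Fin 2) (Fin 2) ℂ) (hdet : M.det ≠ 0)
    {f h : MvPolynomial (Fin 2) ℂ} (heq : subst M f = h) : CubicEquiv f h :=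
  ⟨mkGL M hdet, by rw [mkGL_coe]; exact heq⟩

lemma cbrt (a : ℂ) : ∃ t : ℂ, t ^ 3 = a := by
  obtain ⟨t, ht⟩ := IsAlgClosed.exists_root (Polynomial.X ^ 3 - Polynomial.C a)
    (by rw [Polynomial.degree_X_pow_sub_C (by norm_num)]; norm_num)
  refine ⟨t, ?_⟩
  have := ht
  simp only [Polynomial.IsRoot, Polynomial.eval_sub, Polynomial.eval_pow,
    Polynomial.eval_X, Polynomial.eval_C] at this
  exact sub_eq_zero.mp this

lemma subst_X0 (α β γ δ : ℂ) : subst !![α, γ; β, δ] (X 0) = C α * X 0 + C β * X 1 := by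
  have m00 : (!![α, γ; β, δ] : Matrix (Fin 2) (Fin 2) ℂ) 0 0 = α := rfl
  have m10 : (!![α, γ; β, δ] : Matrix (Fin 2) (Fin 2) ℂ) 1 0 = β := rfl
  simp [subst, Fin.sum_univ_two, m00, m10]

lemma subst_X1 (α β γ δ : ℂ) : subst !![α, γ; β, δ] (X 1) = C γ * X 0 + C δ * X 1 := by
  have m01 : (!![α, γ; β, δ] : Matrix (Fin 2) (Fin 2) ℂ) 0 1 = γ := rfl
  have m11 : (!![α, γ; β, δ] : Matrix (Fin 2) (Fin 2) ℂ) 1 1 = δ := rfl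
  simp [subst, Fin.sum_univ_two, m01, m11]

lemma eval_quad (v : Fin 2 → ℂ) (a b c d : ℂ) :
    eval v (quad a b c d) = a * v 0 ^ 3 + b * (v 0 ^ 2 * v 1) + c * (v 0 * v 1 ^ 2) + d * v 1 ^ 3 := by
  simp [quad]

lemma exists_a_ne_zero {a b c d : ℂ} (hf : quad a b c d ≠ 0) :
    ∃ a' b' c' d' : ℂ, a' ≠ 0 ∧ CubicEquiv (quad a b c d) (quad a' b' c' d') := by
  have hev : ∃ v : Fin 2 → ℂ, eval v (quad a b c d) ≠ 0 := by
    by_contra hall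
    push_neg at hall
    exact hf (MvPolynomial.funext (q := 0) (fun v => by simp [hall v]))
  obtain ⟨v, hv⟩ := hev
  rw [eval_quad] at hv
  by_cases hp : v 0 ≠ 0
  · refine ⟨A1 a b c d (v 0) (v 1) 0 1, A2 a b c d (v 0) (v 1) 0 1,
      A3 a b c d (v 0) (v 1) 0 1, A4 a b c d (v 0) (v 1) 0 1, ?_, ?_⟩
    · simp only [A1]; intro h; apply hv; rw [← h]; ring
    · exact equiv_of_subst !![v 0, v 1; 0, 1]
        (by rw [Matrix.det_fin_two_of]; simpa using hp) (subst_quad a b c d (v 0) (v 1) 0 1)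
  · push_neg at hp
    have hq : v 1 ≠ 0 := by
      intro h; apply hv; rw [hp, h]; ring
    refine ⟨A1 a b c d (v 0) (v 1) 1 0, A2 a b c d (v 0) (v 1) 1 0,
      A3 a b c d (v 0) (v 1) 1 0, A4 a b c d (v 0) (v 1) 1 0, ?_, ?_⟩
    · simp only [A1]; intro h; apply hv; rw [← h]; ring
    · exact equiv_of_subst !![v 0, v 1; 1, 0]
        (by rw [Matrix.det_fin_two_of]; simpa using hq) (subst_quad a b c d (v 0) (v 1) 1 0)

lemma factor {a : ℂ} (ha : a ≠ 0) (b c d : ℂ) : ∃ r1 r2 r3 : ℂ,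
    quad a b c d = C a * ((X 0 - C r1 * X 1) * ((X 0 - C r2 * X 1) * (X 0 - C r3 * X 1))) := by
  set P : Polynomial ℂ := Polynomial.C a * Polynomial.X ^ 3 + Polynomial.C b * Polynomial.X ^ 2
      + Polynomial.C c * Polynomial.X + Polynomial.C d with hPdef
  have hdeg : P.natDegree = 3 := Polynomial.natDegree_cubic ha
  have hcard : Multiset.card P.roots = 3 := by
    rw [IsAlgClosed.card_roots_eq_natDegree, hdeg]
  obtain ⟨r1, r2, r3, hroots⟩ := Multiset.card_eq_three.mp hcard
  have hfact := Polynomial.C_leadingCoeff_mul_prod_multiset_X_sub_C (p := P) (by rw [hcard, hdeg])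
  rw [show P.leadingCoeff = a from Polynomial.leadingCoeff_cubic ha, hroots] at hfact
  simp only [Multiset.insert_eq_cons, Multiset.map_cons, Multiset.map_singleton,
    Multiset.prod_cons, Multiset.prod_singleton] at hfact
  have hexp : (Polynomial.X - Polynomial.C r1) * ((Polynomial.X - Polynomial.C r2)
      * (Polynomial.X - Polynomial.C r3))
      = Polynomial.X ^ 3 - Polynomial.C (r1 + r2 + r3) * Polynomial.X ^ 2
        + Polynomial.C (r1*r2 + r1*r3 + r2*r3) * Polynomial.X - Polynomial.C (r1*r2*r3) := by
    simp only [Polynomial.C_add, Polynomial.C_mul]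
    ring
  rw [hexp] at hfact
  have hb : b = -(a * (r1 + r2 + r3)) := by
    have h2 := congrArg (fun Q => Polynomial.coeff Q 2) hfact
    simp only [Polynomial.coeff_add, Polynomial.coeff_sub, Polynomial.C_add, add_mul,
      Polynomial.coeff_C, Polynomial.coeff_C_mul, Polynomial.coeff_X_pow, Polynomial.coeff_X,
      hPdef] at h2
    norm_num at h2
    first | linear_combination h2 | linear_combination -h2
  have hc : c = a * (r1*r2 + r1*r3 + r2*r3) := by
    have h1 := congrArg (fun Q => Polynomial.coeff Q 1) hfact
    simp only [Polynomial.coeff_add, Polynomial.coeff_sub, Polynomial.C_add, add_mul,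
      Polynomial.coeff_C, Polynomial.coeff_C_mul, Polynomial.coeff_X_pow, Polynomial.coeff_X,
      hPdef] at h1
    norm_num at h1
    first | linear_combination h1 | linear_combination -h1
  have hd : d = -(a * (r1*r2*r3)) := by
    have h0 := congrArg (fun Q => Polynomial.coeff Q 0) hfact
    simp only [Polynomial.coeff_add, Polynomial.coeff_sub, Polynomial.C_add, add_mul,
      Polynomial.coeff_C, Polynomial.coeff_C_mul, Polynomial.coeff_X_pow, Polynomial.coeff_X,
      hPdef] at h0
    norm_num at h0
    first | linear_combination h0 | linear_combination -h0
  refine ⟨r1, r2, r3, ?_⟩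
  subst hb; subst hc; subst hd
  simp only [quad, map_neg, map_mul, map_add, map_sub, C_mul, C_add]
  ring

lemma triple_case (a r : ℂ) (ha : a ≠ 0) :
    CubicEquiv (C a * ((X 0 - C r * X 1) * ((X 0 - C r * X 1) * (X 0 - C r * X 1))))
      ((X 0 : MvPolynomial (Fin 2) ℂ) ^ 3) := by
  obtain ⟨t, ht⟩ := cbrt a
  have ht0 : t ≠ 0 := by intro h; rw [h] at ht; exact ha (by rw [← ht]; ring)
  apply CubicEquiv.symm
  apply equiv_of_subst !![t, 0; -(t*r), 1]
    (by rw [Matrix.det_fin_two_of]; simpa using ht0)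
  rw [map_pow, subst_X0]
  have hC : (C t : MvPolynomial (Fin 2) ℂ) ^ 3 = C a := by rw [← map_pow, ht]
  simp only [map_neg, map_mul]
  linear_combination (X 0 - C r * X 1) ^ 3 * hC

lemma double_case (a r1 r3 : ℂ) (ha : a ≠ 0) (h13 : r1 ≠ r3) :
    CubicEquiv (C a * ((X 0 - C r1 * X 1) * ((X 0 - C r1 * X 1) * (X 0 - C r3 * X 1))))
      ((X 0 : MvPolynomial (Fin 2) ℂ) ^ 2 * X 1) := by
  apply CubicEquiv.symm
  apply equiv_of_subst !![1, a; -r1, -(a*r3)]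
    (by rw [Matrix.det_fin_two_of]
        intro h
        apply mul_ne_zero ha (sub_ne_zero.mpr h13)
        linear_combination h)
  rw [map_mul, map_pow, subst_X0, subst_X1]
  simp only [map_neg, map_mul, map_one]
  ring

lemma canonK_equiv (u v w z : ℂ) (h : u*z - v*w ≠ 0) :
    CubicEquiv ((C u * X 0 + C v * X 1) * ((C w * X 0 + C z * X 1)
        * ((C u * X 0 + C v * X 1) + (C w * X 0 + C z * X 1))))
      (X 0 * (X 1 * (X 0 + X 1))) := by
  apply CubicEquiv.symm
  apply equiv_of_subst !![u, w; v, z]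
    (by rw [Matrix.det_fin_two_of]; simpa [mul_comm] using h)
  rw [map_mul, map_mul, map_add, subst_X0, subst_X1]

lemma distinct_case (a r1 r2 r3 : ℂ) (ha : a ≠ 0) (h12 : r1 ≠ r2) (h13 : r1 ≠ r3)
    (h23 : r2 ≠ r3) :
    CubicEquiv (C a * ((X 0 - C r1 * X 1) * ((X 0 - C r2 * X 1) * (X 0 - C r3 * X 1))))
      (X 0 * (X 1 * (X 0 + X 1))) := by
  have h12' : r1 - r2 ≠ 0 := sub_ne_zero.mpr h12
  obtain ⟨U, hUdef⟩ : ∃ U : ℂ, U = a*(r3-r2)/(r1-r2) := ⟨_, rfl⟩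
  obtain ⟨V, hVdef⟩ : ∃ V : ℂ, V = a*(r1-r3)/(r1-r2) := ⟨_, rfl⟩
  have hU : U ≠ 0 := by rw [hUdef]; exact div_ne_zero (mul_ne_zero ha (sub_ne_zero.mpr (Ne.symm h23))) h12'
  have hV : V ≠ 0 := by rw [hVdef]; exact div_ne_zero (mul_ne_zero ha (sub_ne_zero.mpr h13)) h12'
  have hUV : U + V = a := by rw [hUdef, hVdef]; field_simp; ring
  have hUVr : U*r1 + V*r2 = a*r3 := by rw [hUdef, hVdef]; field_simp; ring
  obtain ⟨m, hm⟩ := cbrt (U^2/V)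
  have hm0 : m ≠ 0 := by
    intro h; rw [h] at hm
    exact div_ne_zero (pow_ne_zero 2 hU) hV (by rw [← hm]; ring)
  obtain ⟨n, hndef⟩ : ∃ n : ℂ, n = U/m^2 := ⟨_, rfl⟩
  have hn0 : n ≠ 0 := by rw [hndef]; exact div_ne_zero hU (pow_ne_zero _ hm0)
  have h1 : m^2*n = U := by rw [hndef]; field_simp
  have h2 : m*n^2 = V := by
    have hm' : U^2 = V * m^3 := by
      rw [hm]; field_simp
    rw [hndef]
    field_simp
    linear_combination hm'
  have hA : a = m^2*n + m*n^2 := by rw [h1, h2, hUV]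
  have hB : a*r3 = m^2*n*r1 + m*n^2*r2 := by rw [h1, h2, hUVr]
  have key : (C a * ((X 0 - C r1 * X 1) * ((X 0 - C r2 * X 1) * (X 0 - C r3 * X 1)))
        : MvPolynomial (Fin 2) ℂ)
      = (C m * X 0 + C (-(m*r1)) * X 1) * ((C n * X 0 + C (-(n*r2)) * X 1)
        * ((C m * X 0 + C (-(m*r1)) * X 1) + (C n * X 0 + C (-(n*r2)) * X 1))) := by
    apply MvPolynomial.funext
    intro v
    simp only [map_mul, map_add, map_sub, map_neg, eval_C, eval_X]
    linear_combination ((v 0 - r1 * v 1) * (v 0 - r2 * v 1) * v 0) * hA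
      - ((v 0 - r1 * v 1) * (v 0 - r2 * v 1) * v 1) * hB
  have hcanon := canonK_equiv m (-(m*r1)) n (-(n*r2)) (by
    intro h
    apply mul_ne_zero (mul_ne_zero hm0 hn0) h12'
    linear_combination h)
  rw [key]
  exact hcanon

lemma omega_ex : ∃ ω : ℂ, ω^2 + ω + 1 = 0 := by
  obtain ⟨ω, hω⟩ := IsAlgClosed.exists_root
    ((Polynomial.C 1 * Polynomial.X^2 + Polynomial.C 1 * Polynomial.X + Polynomial.C 1 : Polynomial ℂ))
    (by rw [Polynomial.degree_quadratic one_ne_zero]; norm_num)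
  refine ⟨ω, ?_⟩
  have := hω
  simp only [Polynomial.IsRoot, Polynomial.eval_add, Polynomial.eval_mul, Polynomial.eval_pow,
    Polynomial.eval_X, Polynomial.eval_C, one_mul] at this
  exact this

lemma ghz_equivK : CubicEquiv ((X 0 : MvPolynomial (Fin 2) ℂ)^3 + X 1^3)
    (X 0 * (X 1 * (X 0 + X 1))) := by
  obtain ⟨ω, hω⟩ := omega_ex
  have hω1 : ω ≠ 1 := by intro h; rw [h] at hω; norm_num at hω
  have d12 : (-1 : ℂ) ≠ -ω := by
    intro h; exact hω1 (neg_inj.mp h).symm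
  have d13 : (-1 : ℂ) ≠ -ω^2 := by
    intro h
    have h2 : ω^2 = 1 := by linear_combination h
    have hm2 : ω = -2 := by linear_combination hω - h2
    rw [hm2] at h2; norm_num at h2
  have d23 : (-ω : ℂ) ≠ -ω^2 := by
    intro h
    have h2 : ω^2 = ω := by linear_combination h
    have hm : ω = -(1/2) := by linear_combination (hω - h2) / 2
    rw [hm] at h2; norm_num at h2
  have hfact : ((X 0 : MvPolynomial (Fin 2) ℂ)^3 + X 1^3)
      = C 1 * ((X 0 - C (-1) * X 1) * ((X 0 - C (-ω) * X 1) * (X 0 - C (-ω^2) * X 1))) := by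
    apply MvPolynomial.funext
    intro v
    simp only [map_mul, map_add, map_sub, map_neg, map_pow, map_one, eval_C, eval_X, eval_pow,
      eval_add, one_mul]
    linear_combination (-(v 0^2*v 1) - ω*(v 0*v 1^2) + (1-ω)*v 1^3) * hω
  rw [hfact]
  exact distinct_case 1 (-1) (-ω) (-ω^2) one_ne_zero d12 d13 d23

lemma exists_equiv (f : MvPolynomial (Fin 2) ℂ) (hf : f ≠ 0) (hhom : f.IsHomogeneous 3) :
    CubicEquiv f ((X 0 : MvPolynomial (Fin 2) ℂ)^3) ∨
    CubicEquiv f ((X 0 : MvPolynomial (Fin 2) ℂ)^2 * X 1) ∨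
    CubicEquiv f ((X 0 : MvPolynomial (Fin 2) ℂ)^3 + X 1^3) := by
  have hq := decomp f hhom
  rw [hq] at hf ⊢
  obtain ⟨a', b', c', d', ha', hequiv⟩ := exists_a_ne_zero hf
  obtain ⟨r1, r2, r3, hfact⟩ := factor ha' b' c' d'
  rw [hfact] at hequiv
  by_cases h12 : r1 = r2
  · by_cases h13 : r1 = r3
    · left
      refine hequiv.trans ?_
      rw [← h12, ← h13]
      exact triple_case a' r1 ha'
    · right; left
      refine hequiv.trans ?_
      rw [← h12]
      exact double_case a' r1 r3 ha' h13
  · by_cases h13 : r1 = r3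
    · right; left
      refine hequiv.trans ?_
      have hre : (C a' * ((X 0 - C r1 * X 1) * ((X 0 - C r2 * X 1) * (X 0 - C r3 * X 1)))
            : MvPolynomial (Fin 2) ℂ)
          = C a' * ((X 0 - C r1 * X 1) * ((X 0 - C r1 * X 1) * (X 0 - C r2 * X 1))) := by
        rw [← h13]; ring
      rw [hre]
      exact double_case a' r1 r2 ha' (fun h => h12 h)
    · by_cases h23 : r2 = r3
      · right; left
        refine hequiv.trans ?_
        have hre : (C a' * ((X 0 - C r1 * X 1) * ((X 0 - C r2 * X 1) * (X 0 - C r3 * X 1)))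
              : MvPolynomial (Fin 2) ℂ)
            = C a' * ((X 0 - C r2 * X 1) * ((X 0 - C r2 * X 1) * (X 0 - C r1 * X 1))) := by
          rw [← h23]; ring
        rw [hre]
        exact double_case a' r2 r1 ha' (fun h => h12 h.symm)
      · right; right
        refine hequiv.trans ?_
        exact (distinct_case a' r1 r2 r3 ha' h12 h13 h23).trans ghz_equivK.symm

/-- SLOCC classification of three bosonic qubits: every nonzero binary cubic over ℂ is
GL₂(ℂ)-equivalent to exactly one of x³ (separable), x²y (W-type) and x³ + y³ (GHZ-type). -/
theorem binary_cubic_classification (f : MvPolynomial (Fin 2) ℂ)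
    (hf : f ≠ 0) (hhom : f.IsHomogeneous 3) :
    (CubicEquiv f (X 0 ^ 3) ∧ ¬ CubicEquiv f (X 0 ^ 2 * X 1)
        ∧ ¬ CubicEquiv f (X 0 ^ 3 + X 1 ^ 3)) ∨
    (¬ CubicEquiv f (X 0 ^ 3) ∧ CubicEquiv f (X 0 ^ 2 * X 1)
        ∧ ¬ CubicEquiv f (X 0 ^ 3 + X 1 ^ 3)) ∨
    (¬ CubicEquiv f (X 0 ^ 3) ∧ ¬ CubicEquiv f (X 0 ^ 2 * X 1)
        ∧ CubicEquiv f (X 0 ^ 3 + X 1 ^ 3)) := by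
  rcases exists_equiv f hf hhom with h | h | h
  · exact Or.inl ⟨h, fun h' => nfneq12 (h.symm.trans h'), fun h' => nfneq13 (h.symm.trans h')⟩
  · exact Or.inr (Or.inl ⟨fun h' => nfneq12 (h'.symm.trans h), h,
      fun h' => nfneq23 (h.symm.trans h')⟩)
  · exact Or.inr (Or.inr ⟨fun h' => nfneq13 (h'.symm.trans h),
      fun h' => nfneq23 (h'.symm.trans h), h⟩)

end
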